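/- Let P be a family of vertex-disjoint paths partitioning the vertex set, |P| ≥ 2, with distinct paths α, β, γ ∈ P (γ distinct from α and β), where a is an endpoint of α, b an endpoint of β, and v, u are consecutive vertices on γ (v immediately preceding u). Then removing α, β, γ and adding the two paths obtained from the edges au and bv — namely (α reversed, then a–u, then the tail of γ from u onward) and (the head of γ up to v, then v–b, then β reversed) — yields a family of |P| − 1 vertex-disjoint paths partitioning the vertex set. -/

import Mathlib

/-- let `P` be a family of vertex-disjoint paths partitioning the vertex set,
with pairwise distinct paths `α, β, γ ∈ P`, where `a` is an endpoint (first vertex) of `α`,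
`b` an endpoint (first vertex) of `β`, and `γ_{j-1}, γ_j` consecutive on `γ` (`0 < j <`
length of `γ`). Replacing `α, β, γ` by the two paths `(α reversed) ++ (γ from position j)`
(joined by the edge `a γ_j`) and `(γ up to position j) ++ (β reversed)` (joined by the edge
`γ_{j-1} b`) yields a family of `|P| - 1` vertex-disjoint paths partitioning the vertex set. -/
theorem stmt_16 {V : Type*} [Fintype V] [DecidableEq V]
    (P : Finset (List V))
    (hpaths : ∀ δ ∈ P, δ ≠ [] ∧ δ.Nodup)
    (hpart : ∀ v : V, ∃! δ, δ ∈ P ∧ v ∈ δ)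
    (hP2 : 2 ≤ P.card)
    (α β γ : List V) (hα : α ∈ P) (hβ : β ∈ P) (hγ : γ ∈ P)
    (hαβ : α ≠ β) (hαγ : α ≠ γ) (hβγ : β ≠ γ)
    (a b : V) (ha : α.head? = some a) (hb : β.head? = some b)
    (j : ℕ) (hj0 : 0 < j) (hjlen : j < γ.length) :
    (∀ δ ∈ (P \ {α, β, γ}) ∪ {α.reverse ++ γ.drop j, γ.take j ++ β.reverse},
        δ ≠ [] ∧ δ.Nodup) ∧
      (∀ v : V, ∃! δ,
        δ ∈ (P \ {α, β, γ}) ∪ {α.reverse ++ γ.drop j, γ.take j ++ β.reverse} ∧ v ∈ δ) ∧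
      ((P \ {α, β, γ}) ∪ {α.reverse ++ γ.drop j, γ.take j ++ β.reverse}).card + 1 =
        P.card := by
  -- disjointness of distinct members of P
  have hdisj : ∀ δ ∈ P, ∀ δ' ∈ P, δ ≠ δ' → ∀ v, v ∈ δ → v ∉ δ' := by
    intro δ hδ δ' hδ' hne v hv hv'
    obtain ⟨w, hw, hu⟩ := hpart v
    exact hne ((hu δ ⟨hδ, hv⟩).trans (hu δ' ⟨hδ', hv'⟩).symm)
  set A := α.reverse ++ γ.drop j with hA
  set B := γ.take j ++ β.reverse with hB
  have hαne : α ≠ [] := (hpaths α hα).1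
  have hβne : β ≠ [] := (hpaths β hβ).1
  have hαnd : α.Nodup := (hpaths α hα).2
  have hβnd : β.Nodup := (hpaths β hβ).2
  have hγnd : γ.Nodup := (hpaths γ hγ).2
  have haα : a ∈ α := by
    cases α with
    | nil => simp at ha
    | cons x t =>
      simp only [List.head?_cons, Option.some.injEq] at ha
      subst ha; exact List.mem_cons_self
  have hbβ : b ∈ β := by
    cases β with
    | nil => simp at hb
    | cons x t =>
      simp only [List.head?_cons, Option.some.injEq] at hb
      subst hb; exact List.mem_cons_self
  have dαγ : ∀ v ∈ α, v ∉ γ := fun v hv => hdisj α hα γ hγ hαγ v hv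
  have dβγ : ∀ v ∈ β, v ∉ γ := fun v hv => hdisj β hβ γ hγ hβγ v hv
  have dαβ : ∀ v ∈ α, v ∉ β := fun v hv => hdisj α hα β hβ hαβ v hv
  have htd : γ.take j ++ γ.drop j = γ := List.take_append_drop j γ
  have hdtake : ∀ v ∈ γ.take j, v ∉ γ.drop j := by
    have : (γ.take j ++ γ.drop j).Nodup := by rw [htd]; exact hγnd
    exact fun v hv h => (List.nodup_append.1 this).2.2 v hv v h rfl
  have hdropγ : ∀ v ∈ γ.drop j, v ∈ γ := fun v hv => htd ▸ List.mem_append_right _ hv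
  have htakeγ : ∀ v ∈ γ.take j, v ∈ γ := fun v hv => htd ▸ List.mem_append_left _ hv
  have memA : ∀ v, v ∈ A ↔ v ∈ α ∨ v ∈ γ.drop j := by
    intro v; rw [hA, List.mem_append, List.mem_reverse]
  have memB : ∀ v, v ∈ B ↔ v ∈ γ.take j ∨ v ∈ β := by
    intro v; rw [hB, List.mem_append, List.mem_reverse]
  -- membership in the new family
  have memNew : ∀ δ, δ ∈ (P \ {α, β, γ}) ∪ {A, B} ↔
      (δ ∈ P ∧ δ ≠ α ∧ δ ≠ β ∧ δ ≠ γ) ∨ δ = A ∨ δ = B := by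
    intro δ
    simp only [Finset.mem_union, Finset.mem_sdiff, Finset.mem_insert, Finset.mem_singleton]
    tauto
  -- key: elements of P \ {α,β,γ} are disjoint from A and B
  have hQA : ∀ δ, δ ∈ P → δ ≠ α → δ ≠ γ → ∀ v, v ∈ δ → v ∉ A := by
    intro δ hδ h1 h3 v hv hvA
    rcases (memA v).1 hvA with h | h
    · exact hdisj δ hδ α hα h1 v hv h
    · exact hdisj δ hδ γ hγ h3 v hv (hdropγ v h)
  have hQB : ∀ δ, δ ∈ P → δ ≠ β → δ ≠ γ → ∀ v, v ∈ δ → v ∉ B := by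
    intro δ hδ h2 h3 v hv hvB
    rcases (memB v).1 hvB with h | h
    · exact hdisj δ hδ γ hγ h3 v hv (htakeγ v h)
    · exact hdisj δ hδ β hβ h2 v hv h
  have hAB : ∀ v, v ∈ A → v ∉ B := by
    intro v hvA hvB
    rcases (memA v).1 hvA with h | h <;> rcases (memB v).1 hvB with h' | h'
    · exact dαγ v h (htakeγ v h')
    · exact dαβ v h h'
    · exact hdtake v h' h
    · exact dβγ v h' (hdropγ v h)
  have haA : a ∈ A := (memA a).2 (Or.inl haα)
  have hbB : b ∈ B := (memB b).2 (Or.inr hbβ)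
  refine ⟨?_, ?_, ?_⟩
  · -- nonempty and nodup
    intro δ hδ
    rcases (memNew δ).1 hδ with ⟨hδP, _⟩ | rfl | rfl
    · exact hpaths δ hδP
    · constructor
      · simp [hA, hαne]
      · rw [hA, List.nodup_append]
        exact ⟨(List.nodup_reverse.2 hαnd), (htd ▸ hγnd).of_append_right,
          fun v hv w hw hvw => by subst hvw; exact dαγ v (List.mem_reverse.1 hv) (hdropγ v hw)⟩
    · constructor
      · have : γ.take j ≠ [] := by
          intro h
          have := congrArg List.length h
          simp [min_eq_left hjlen.le] at this
          omega
        simp [hB, this]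
      · rw [hB, List.nodup_append]
        exact ⟨(htd ▸ hγnd).of_append_left, (List.nodup_reverse.2 hβnd),
          fun v hv w hw hvw => by subst hvw; exact dβγ v (List.mem_reverse.1 hw) (htakeγ v hv)⟩
  · -- partition
    intro v
    obtain ⟨δ₀, ⟨hδ₀P, hvδ₀⟩, huniq⟩ := hpart v
    by_cases h1 : δ₀ = α
    · subst h1
      refine ⟨A, ⟨(memNew A).2 (Or.inr (Or.inl rfl)), (memA v).2 (Or.inl hvδ₀)⟩, ?_⟩
      intro δ ⟨hδ, hvδ⟩
      rcases (memNew δ).1 hδ with ⟨hδP, hne1, _, hne3⟩ | rfl | rfl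
      · exact absurd ((memA v).2 (Or.inl hvδ₀)) (hQA δ hδP hne1 hne3 v hvδ)
      · rfl
      · exact absurd hvδ (hAB v ((memA v).2 (Or.inl hvδ₀)))
    · by_cases h2 : δ₀ = β
      · subst h2
        refine ⟨B, ⟨(memNew B).2 (Or.inr (Or.inr rfl)), (memB v).2 (Or.inr hvδ₀)⟩, ?_⟩
        intro δ ⟨hδ, hvδ⟩
        rcases (memNew δ).1 hδ with ⟨hδP, _, hne2, hne3⟩ | rfl | rfl
        · exact absurd ((memB v).2 (Or.inr hvδ₀)) (hQB δ hδP hne2 hne3 v hvδ)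
        · exact absurd ((memB v).2 (Or.inr hvδ₀)) (hAB v hvδ)
        · rfl
      · by_cases h3 : δ₀ = γ
        · have hvγ : v ∈ γ := h3 ▸ hvδ₀
          have hvtd : v ∈ γ.take j ∨ v ∈ γ.drop j := by
            rw [← List.mem_append, htd]; exact hvγ
          rcases hvtd with hvt | hvd
          · refine ⟨B, ⟨(memNew B).2 (Or.inr (Or.inr rfl)), (memB v).2 (Or.inl hvt)⟩, ?_⟩
            intro δ ⟨hδ, hvδ⟩
            rcases (memNew δ).1 hδ with ⟨hδP, _, hne2, hne3⟩ | rfl | rfl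
            · exact absurd ((memB v).2 (Or.inl hvt)) (hQB δ hδP hne2 hne3 v hvδ)
            · exact absurd ((memB v).2 (Or.inl hvt)) (hAB v hvδ)
            · rfl
          · refine ⟨A, ⟨(memNew A).2 (Or.inr (Or.inl rfl)), (memA v).2 (Or.inr hvd)⟩, ?_⟩
            intro δ ⟨hδ, hvδ⟩
            rcases (memNew δ).1 hδ with ⟨hδP, hne1, _, hne3⟩ | rfl | rfl
            · exact absurd ((memA v).2 (Or.inr hvd)) (hQA δ hδP hne1 hne3 v hvδ)
            · rfl
            · exact absurd hvδ (hAB v ((memA v).2 (Or.inr hvd)))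
        · refine ⟨δ₀, ⟨(memNew δ₀).2 (Or.inl ⟨hδ₀P, h1, h2, h3⟩), hvδ₀⟩, ?_⟩
          intro δ ⟨hδ, hvδ⟩
          rcases (memNew δ).1 hδ with ⟨hδP, _, _, _⟩ | rfl | rfl
          · exact huniq δ ⟨hδP, hvδ⟩
          · rcases (memA v).1 hvδ with h | h
            · exact absurd (huniq α ⟨hα, h⟩).symm h1
            · exact absurd (huniq γ ⟨hγ, hdropγ v h⟩).symm h3
          · rcases (memB v).1 hvδ with h | h
            · exact absurd (huniq γ ⟨hγ, htakeγ v h⟩).symm h3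
            · exact absurd (huniq β ⟨hβ, h⟩).symm h2
  · -- cardinality
    have hAneB : A ≠ B := fun h => hAB a haA (h ▸ haA)
    have hAnotQ : A ∉ P \ {α, β, γ} := by
      intro h
      simp only [Finset.mem_sdiff, Finset.mem_insert, Finset.mem_singleton] at h
      exact hdisj A h.1 α hα (fun he => h.2 (Or.inl he)) a haA haα
    have hBnotQ : B ∉ P \ {α, β, γ} := by
      intro h
      simp only [Finset.mem_sdiff, Finset.mem_insert, Finset.mem_singleton] at h
      exact hdisj B h.1 β hβ (fun he => h.2 (Or.inr (Or.inl he))) b hbB hbβ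
    have hdisjQ : Disjoint (P \ {α, β, γ}) ({A, B} : Finset (List V)) := by
      rw [Finset.disjoint_right]
      intro x hx
      rcases Finset.mem_insert.1 hx with rfl | hx'
      · exact hAnotQ
      · rw [Finset.mem_singleton] at hx'; subst hx'; exact hBnotQ
    rw [Finset.card_union_of_disjoint hdisjQ]
    have hsub : ({α, β, γ} : Finset (List V)) ⊆ P := by
      intro x hx
      rcases Finset.mem_insert.1 hx with rfl | hx'
      · exact hα
      · rcases Finset.mem_insert.1 hx' with rfl | hx''
        · exact hβ
        · rw [Finset.mem_singleton] at hx''; subst hx''; exact hγ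
    have hcard3 : ({α, β, γ} : Finset (List V)).card = 3 := by
      rw [Finset.card_insert_of_notMem (by simp [hαβ, hαγ]),
        Finset.card_insert_of_notMem (by simp [hβγ]), Finset.card_singleton]
    have hcardAB : ({A, B} : Finset (List V)).card = 2 := by
      rw [Finset.card_insert_of_notMem (by simp [hAneB]), Finset.card_singleton]
    have hP3 : 3 ≤ P.card := hcard3 ▸ Finset.card_le_card hsub
    rw [Finset.card_sdiff_of_subset hsub, hcard3, hcardAB]
    omega
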